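/- For real β, δ with β + δ > 0 and α, γ > 0, the series ∑_{n=0}^∞ z^n / (Γ(α + nβ) Γ(γ + nδ)) converges absolutely for every complex number z. -/

import Mathlib

open Real Filter
set_option maxHeartbeats 1000000

private lemma gammaMono' {x y : ℝ} (hx : 2 ≤ x) (hxy : x ≤ y) : Real.Gamma x ≤ Real.Gamma y :=
  Real.Gamma_strictMonoOn_Ici.monotoneOn hx (le_trans hx hxy) hxy

private lemma oneLeGamma' {x : ℝ} (hx : 2 ≤ x) : 1 ≤ Real.Gamma x := by
  have := gammaMono' le_rfl hx
  rwa [Real.Gamma_two] at this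

private lemma gammaAddNat' {x : ℝ} (hx : 1 ≤ x) (k : ℕ) :
    Real.Gamma x * x ^ k ≤ Real.Gamma (x + k) := by
  induction k with
  | zero => simp
  | succ k ih =>
    have hx0 : (0:ℝ) < x := lt_of_lt_of_le one_pos hx
    have hxk : (0:ℝ) < x + k := by positivity
    have h1 : Real.Gamma (x + ((k:ℕ)+1:ℕ)) = (x + k) * Real.Gamma (x + k) := by
      have h2 : (x + ((k:ℕ)+1:ℕ) : ℝ) = (x + k) + 1 := by push_cast; ring
      rw [h2, Real.Gamma_add_one (ne_of_gt hxk)]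
    rw [h1]
    calc Real.Gamma x * x ^ (k+1) = x * (Real.Gamma x * x ^ k) := by ring
    _ ≤ (x + k) * (Real.Gamma x * x ^ k) := by
        apply mul_le_mul_of_nonneg_right (by linarith [Nat.cast_nonneg (α := ℝ) k])
        positivity
    _ ≤ (x + k) * Real.Gamma (x + k) :=
        mul_le_mul_of_nonneg_left ih (le_of_lt hxk)

private lemma gammaLowerMul {x b : ℝ} (hx : 2 ≤ x) (k : ℕ) (hb : x + k ≤ b) :
    Real.Gamma x * x ^ k ≤ Real.Gamma b :=
  le_trans (gammaAddNat' (by linarith) k)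
    (gammaMono' (by have := Nat.cast_nonneg (α := ℝ) k; linarith) hb)

private lemma gammaLowerPow {x b : ℝ} (hx : 2 ≤ x) (k : ℕ) (hb : x + k ≤ b) :
    x ^ k ≤ Real.Gamma b := by
  calc (x:ℝ) ^ k = 1 * x ^ k := (one_mul _).symm
  _ ≤ Real.Gamma x * x ^ k := by
      apply mul_le_mul_of_nonneg_right (oneLeGamma' hx); positivity
  _ ≤ Real.Gamma b := gammaLowerMul hx k hb

private lemma linTendsto (c t : ℝ) (ht : 0 < t) :
    Tendsto (fun n : ℕ => c + n * t) atTop atTop := by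
  have h1 : Tendsto (fun n : ℕ => (n:ℝ) * t) atTop atTop :=
    tendsto_natCast_atTop_atTop.atTop_mul_const ht
  exact tendsto_atTop_add_const_left atTop c h1

private lemma existsB (r e : ℝ) (hr : 0 ≤ r) (he : 0 < e) :
    ∃ B : ℝ, 2 ≤ B ∧ 2*r+2 ≤ B ^ e := by
  refine ⟨max 2 ((2*r+2) ^ (1/e)), le_max_left _ _, ?_⟩
  have h0 : (0:ℝ) ≤ 2*r+2 := by linarith
  have h1 : ((2*r+2) ^ (1/e)) ^ e ≤ (max 2 ((2*r+2) ^ (1/e))) ^ e :=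
    Real.rpow_le_rpow (Real.rpow_nonneg h0 _) (le_max_right _ _) he.le
  have h2 : ((2*r+2:ℝ) ^ (1/e)) ^ e = 2*r+2 := by
    rw [← Real.rpow_mul h0, one_div, inv_mul_cancel₀ (ne_of_gt he), Real.rpow_one]
  linarith

private lemma rpowBound {B e t W : ℝ} (n k : ℕ) (hB1 : 1 ≤ B) (hW0 : 0 ≤ W)
    (hW : W ≤ B ^ e) (ht : (n:ℝ)*e + t ≤ (k:ℝ)) : B ^ t * W ^ n ≤ B ^ k := by
  have hB0 : (0:ℝ) < B := lt_of_lt_of_le one_pos hB1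
  have s1 : B ^ t * W ^ n ≤ B ^ t * (B ^ e) ^ n :=
    mul_le_mul_of_nonneg_left (pow_le_pow_left₀ hW0 hW n) (Real.rpow_nonneg hB0.le t)
  have s2 : B ^ t * (B ^ e) ^ n = B ^ (t + n * e) := by
    rw [← Real.rpow_natCast (B ^ e) n, ← Real.rpow_mul hB0.le, ← Real.rpow_add hB0]
    ring_nf
  have s3 : B ^ (t + n * e) ≤ B ^ ((k:ℕ):ℝ) :=
    Real.rpow_le_rpow_of_exponent_le hB1 (by push_cast; linarith)
  rw [Real.rpow_natCast] at s3
  linarith [s1, s2 ▸ s1]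

private lemma termBound {r c d : ℝ} (n : ℕ) (hr : 0 ≤ r) (hc : 0 < c)
    (hd : c * (2*r+2)^n ≤ d) : r^n / d ≤ (1/c) * (1/2)^n := by
  have h2r : (0:ℝ) < 2*r+2 := by linarith
  have hlow : 0 < c * (2*r+2)^n := by positivity
  have h1 : r^n / d ≤ r^n / (c * (2*r+2)^n) :=
    div_le_div_of_nonneg_left (pow_nonneg hr n) hlow hd
  have h2 : r^n / (c*(2*r+2)^n) = (1/c) * (r/(2*r+2))^n := by
    rw [div_pow]; field_simp
  have h3 : (r/(2*r+2))^n ≤ ((1:ℝ)/2)^n := by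
    apply pow_le_pow_left₀ (by positivity)
    rw [div_le_div_iff₀ h2r two_pos]; linarith
  calc r^n/d ≤ r^n/(c*(2*r+2)^n) := h1
  _ = (1/c)*(r/(2*r+2))^n := h2
  _ ≤ (1/c)*(1/2)^n := by
      apply mul_le_mul_of_nonneg_left h3; positivity

private lemma wright_aux (α β γ δ : ℝ)
    (hα : 0 < α) (hγ : 0 < γ) (hβδ : 0 < β + δ) (hbd : β ≤ δ) (z : ℂ) :
    Summable (fun n : ℕ =>
      ‖z ^ n / ((Real.Gamma (α + n * β) * Real.Gamma (γ + n * δ) : ℝ) : ℂ)‖) := by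
  have hδ : 0 < δ := by linarith
  set r := ‖z‖ with hrdef
  have hr : (0:ℝ) ≤ r := norm_nonneg z
  have hterm : ∀ n : ℕ,
      ‖z ^ n / ((Real.Gamma (α + n * β) * Real.Gamma (γ + n * δ) : ℝ) : ℂ)‖
        = r ^ n / |Real.Gamma (α + n * β) * Real.Gamma (γ + n * δ)| := by
    intro n
    rw [norm_div, norm_pow, Complex.norm_real, Real.norm_eq_abs]
  suffices h : ∃ C : ℝ, ∃ N : ℕ, ∀ n ≥ N,
      ‖z ^ n / ((Real.Gamma (α + n * β) * Real.Gamma (γ + n * δ) : ℝ) : ℂ)‖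
        ≤ C * (1/2) ^ n by
    obtain ⟨C, N, hCN⟩ := h
    rw [← summable_nat_add_iff N]
    apply Summable.of_nonneg_of_le (fun n => norm_nonneg _)
      (fun n => hCN (n + N) (Nat.le_add_left N n))
    have hgeo : Summable (fun n : ℕ => C * (1/2:ℝ) ^ n) :=
      (summable_geometric_of_lt_one (by norm_num) (by norm_num)).mul_left C
    exact (summable_nat_add_iff N).2 hgeo
  have hs : (0:ℝ) < β + δ := hβδ
  rcases lt_or_ge β 0 with hβ | hβ
  · -- reflection case: β < 0
    obtain ⟨B, hB2, hBpow⟩ := existsB r (β+δ) hr hβδ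
    have hB1 : (1:ℝ) ≤ B := by linarith
    have hB0 : (0:ℝ) < B := by linarith
    have hc : (0:ℝ) < π * B ^ (α+γ-2) := by
      have := Real.rpow_pos_of_pos hB0 (α+γ-2)
      have := Real.pi_pos
      positivity
    have hev : ∀ᶠ n : ℕ in atTop,
        (B ≤ 1 - α + n * (-β)) ∧ (0 ≤ α + γ - 1 + n * (β+δ)) :=
      ((linTendsto (1-α) (-β) (by linarith)).eventually_ge_atTop B).and
        ((linTendsto (α+γ-1) (β+δ) hβδ).eventually_ge_atTop 0)
    obtain ⟨N, hN⟩ := eventually_atTop.mp hev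
    refine ⟨1 / (π * B ^ (α+γ-2)), N, fun n hn => ?_⟩
    obtain ⟨hxB', hk0⟩ := hN n hn
    have hxB : B ≤ 1 - (α + n*β) := by
      have : (n:ℝ) * (-β) = -((n:ℝ)*β) := by ring
      linarith [hxB', this.le]
    have hx2 : (2:ℝ) ≤ 1 - (α + n*β) := le_trans hB2 hxB
    set k := ⌊α + γ - 1 + n * (β+δ)⌋₊ with hkdef
    have hk_le : (k:ℝ) ≤ α + γ - 1 + n * (β+δ) := Nat.floor_le hk0
    have hk_gt : α + γ - 1 + n * (β+δ) - 1 < (k:ℝ) := by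
      have := Nat.lt_floor_add_one (α + γ - 1 + n * (β+δ))
      push_cast at this ⊢
      linarith
    have hxkb : (1 - (α + n*β)) + (k:ℝ) ≤ γ + n*δ := by
      have hns : (n:ℝ)*(β+δ) = (n:ℝ)*β + (n:ℝ)*δ := by ring
      linarith
    have hGb := gammaLowerMul hx2 k hxkb
    have hb_pos : (0:ℝ) < γ + n*δ := by
      have : (0:ℝ) ≤ (n:ℝ)*δ := by positivity
      linarith
    have hGb_pos : 0 < Real.Gamma (γ + n*δ) := Real.Gamma_pos_of_pos hb_pos
    rw [hterm n]
    by_cases hga : Real.Gamma (α + n*β) = 0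
    · rw [hga, zero_mul, abs_zero, div_zero]
      positivity
    · have hx_pos : (0:ℝ) < 1 - (α + n*β) := by linarith
      have hGx_pos : 0 < Real.Gamma (1 - (α+n*β)) := Real.Gamma_pos_of_pos hx_pos
      have hrefl : Real.Gamma (α+n*β) * Real.Gamma (1 - (α+n*β))
          = π / Real.sin (π * (α+n*β)) := Real.Gamma_mul_Gamma_one_sub _
      have hsin : Real.sin (π * (α+n*β)) ≠ 0 := by
        intro h0
        rw [h0, div_zero] at hrefl
        rcases mul_eq_zero.mp hrefl with h | h
        · exact hga h
        · exact hGx_pos.ne' h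
      have habs : π / Real.Gamma (1 - (α+n*β)) ≤ |Real.Gamma (α+n*β)| := by
        have h1 : |Real.Gamma (α+n*β)| * Real.Gamma (1-(α+n*β))
            = π / |Real.sin (π*(α+n*β))| := by
          rw [← abs_of_pos hGx_pos, ← abs_mul, hrefl, abs_div,
            abs_of_pos Real.pi_pos]
        have hsinpos : 0 < |Real.sin (π*(α+n*β))| := abs_pos.mpr hsin
        have hsin1 : |Real.sin (π*(α+n*β))| ≤ 1 :=
          abs_le.mpr ⟨Real.neg_one_le_sin _, Real.sin_le_one _⟩
        have h2 : π ≤ π / |Real.sin (π*(α+n*β))| := by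
          have := div_le_div_of_nonneg_left Real.pi_pos.le hsinpos hsin1
          rwa [div_one] at this
        rw [div_le_iff₀ hGx_pos]
        linarith [h1, h2]
      have hBk : B ^ (α+γ-2) * (2*r+2)^n ≤ B ^ k :=
        rpowBound n k hB1 (by linarith) hBpow (by linarith)
      have hxk : B ^ k ≤ (1 - (α+n*β)) ^ k := pow_le_pow_left₀ hB0.le hxB k
      have hden : π * B ^ (α+γ-2) * (2*r+2)^n
          ≤ |Real.Gamma (α+n*β) * Real.Gamma (γ+n*δ)| := by
        rw [abs_mul, abs_of_pos hGb_pos]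
        have h3 : π / Real.Gamma (1-(α+n*β))
              * (Real.Gamma (1-(α+n*β)) * (1-(α+n*β))^k)
            ≤ |Real.Gamma (α+n*β)| * Real.Gamma (γ+n*δ) := by
          apply mul_le_mul habs hGb (by positivity) (abs_nonneg _)
        have h4 : π / Real.Gamma (1-(α+n*β))
              * (Real.Gamma (1-(α+n*β)) * (1-(α+n*β))^k)
            = π * (1-(α+n*β))^k := by
          field_simp
        rw [h4] at h3
        have h5 : π * (B ^ (α+γ-2) * (2*r+2)^n) ≤ π * (1-(α+n*β))^k := by
          apply mul_le_mul_of_nonneg_left _ Real.pi_pos.le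
          exact le_trans hBk hxk
        linarith [h3, h5]
      exact le_trans (termBound n hr hc hden) (by rw [one_div])
  · -- monotone case: 0 ≤ β
    obtain ⟨B, hB2, hBpow⟩ := existsB r ((β+δ)/4) hr (by linarith)
    have hB1 : (1:ℝ) ≤ B := by linarith
    have hB0 : (0:ℝ) < B := by linarith
    have hm : ∃ m : ℝ, 0 < m ∧ ∀ᶠ n : ℕ in atTop, m ≤ Real.Gamma (α + n * β) := by
      rcases eq_or_lt_of_le hβ with h0 | h0
      · refine ⟨Real.Gamma α, Real.Gamma_pos_of_pos hα, Eventually.of_forall fun n => ?_⟩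
        rw [← h0, mul_zero, add_zero]
      · exact ⟨1, one_pos,
          ((linTendsto α β h0).eventually_ge_atTop 2).mono fun n hn => oneLeGamma' hn⟩
    obtain ⟨m, hm0, hmev⟩ := hm
    have hc : (0:ℝ) < m * B ^ (-1:ℝ) := by
      have := Real.rpow_pos_of_pos hB0 (-1:ℝ)
      positivity
    have hev : ∀ᶠ n : ℕ in atTop,
        (B ≤ γ/2 + n * (δ/2)) ∧ m ≤ Real.Gamma (α + n * β) :=
      ((linTendsto (γ/2) (δ/2) (by linarith)).eventually_ge_atTop B).and hmev
    obtain ⟨N, hN⟩ := eventually_atTop.mp hev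
    refine ⟨1 / (m * B ^ (-1:ℝ)), N, fun n hn => ?_⟩
    obtain ⟨hyB', hma⟩ := hN n hn
    have hyB : B ≤ (γ + n*δ)/2 := by linarith
    have hy2 : (2:ℝ) ≤ (γ + n*δ)/2 := le_trans hB2 hyB
    set k := ⌊(n:ℝ) * δ / 2⌋₊ with hkdef
    have hnd0 : (0:ℝ) ≤ (n:ℝ)*δ/2 := by positivity
    have hk_le : (k:ℝ) ≤ (n:ℝ)*δ/2 := Nat.floor_le hnd0
    have hk_gt : (n:ℝ)*δ/2 - 1 < (k:ℝ) := by
      have := Nat.lt_floor_add_one ((n:ℝ) * δ / 2)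
      linarith
    have hykb : (γ + n*δ)/2 + (k:ℝ) ≤ γ + n*δ := by linarith
    have hGb := gammaLowerPow hy2 k hykb
    have hBk : B ^ (-1:ℝ) * (2*r+2)^n ≤ B ^ k := by
      apply rpowBound n k hB1 (by linarith) hBpow
      have hδs : (n:ℝ) * ((β+δ)/4) ≤ (n:ℝ)*δ/2 := by
        have : (0:ℝ) ≤ (n:ℝ) := Nat.cast_nonneg n
        nlinarith
      linarith
    have hyk : B ^ k ≤ ((γ + n*δ)/2) ^ k := pow_le_pow_left₀ hB0.le hyB k
    have hga_pos : 0 < Real.Gamma (α + n*β) := by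
      apply Real.Gamma_pos_of_pos
      have : (0:ℝ) ≤ (n:ℝ)*β := by positivity
      linarith
    have hb_pos : (0:ℝ) < γ + n*δ := by
      have : (0:ℝ) ≤ (n:ℝ)*δ := by positivity
      linarith
    have hGb_pos : 0 < Real.Gamma (γ + n*δ) := Real.Gamma_pos_of_pos hb_pos
    rw [hterm n]
    have hden : m * B ^ (-1:ℝ) * (2*r+2)^n
        ≤ |Real.Gamma (α+n*β) * Real.Gamma (γ+n*δ)| := by
      rw [abs_mul, abs_of_pos hga_pos, abs_of_pos hGb_pos]
      calc m * B ^ (-1:ℝ) * (2*r+2)^n = m * (B ^ (-1:ℝ) * (2*r+2)^n) := by ring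
      _ ≤ m * Real.Gamma (γ+n*δ) := by
          apply mul_le_mul_of_nonneg_left _ hm0.le
          exact le_trans hBk (le_trans hyk hGb)
      _ ≤ Real.Gamma (α+n*β) * Real.Gamma (γ+n*δ) :=
          mul_le_mul_of_nonneg_right hma hGb_pos.le
    exact le_trans (termBound n hr hc hden) (by rw [one_div])

/-- For real β, δ with β + δ > 0 and α, γ > 0, the series
∑ zⁿ / (Γ(α + nβ) Γ(γ + nδ)) converges absolutely for every complex z. -/
theorem wright_series_abs_convergent (α β γ δ : ℝ)
    (hα : 0 < α) (hγ : 0 < γ) (hβδ : 0 < β + δ) (z : ℂ) :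
    Summable (fun n : ℕ =>
      ‖z ^ n / ((Real.Gamma (α + n * β) * Real.Gamma (γ + n * δ) : ℝ) : ℂ)‖) := by
  rcases le_total β δ with h | h
  · exact wright_aux α β γ δ hα hγ hβδ h z
  · have := wright_aux γ δ α β hγ hα (by linarith) h z
    have heq : (fun n : ℕ =>
        ‖z ^ n / ((Real.Gamma (α + n * β) * Real.Gamma (γ + n * δ) : ℝ) : ℂ)‖)
        = fun n : ℕ =>
        ‖z ^ n / ((Real.Gamma (γ + n * δ) * Real.Gamma (α + n * β) : ℝ) : ℂ)‖ := by
      funext n; rw [mul_comm]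
    rw [heq]
    exact this
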